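/- Let d, m ∈ ℕ, let a₁, …, a_m ∈ ℝ^d and b₁, …, b_m ∈ ℝ. Define g(x) := (1/4)·∑_{i=1}^m (⟨a_i, x⟩² − b_i²)² and h(x) := (1/4)‖x‖₂⁴ + (1/2)‖x‖₂². Then for every L ≥ ∑_{i=1}^m (3‖a_i‖₂⁴ + ‖a_i‖₂²·b_i²), the function L·h − g is convex on ℝ^d. (L-smooth adaptability of the phase retrieval objective with respect to the quartic kernel.) -/

import Mathlib

open RealInnerProductSpace

lemma quartic_convex (m : ℕ) (A B C L : ℝ) (α β n b : Fin m → ℝ)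
    (hC : 0 ≤ C)
    (hP : ∀ r : ℝ, 0 ≤ A + 2*B*r + C*r^2)
    (hQ : ∀ (r : ℝ) i, (α i + β i * r)^2 ≤ (n i)^2 * (A + 2*B*r + C*r^2))
    (hβ : ∀ i, (β i)^2 ≤ (n i)^2 * C)
    (hn : ∀ i, 0 ≤ n i)
    (hL : ∑ i, (3*(n i)^4 + (n i)^2*(b i)^2) ≤ L) :
    ConvexOn ℝ Set.univ (fun r : ℝ =>
      L * ((1/4) * (A + 2*B*r + C*r^2)^2 + (1/2) * (A + 2*B*r + C*r^2))
        - (1/4) * ∑ i, ((α i + β i * r)^2 - (b i)^2)^2) := by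
  set P : ℝ → ℝ := fun r => A + 2*B*r + C*r^2 with hPdef
  have hL0 : 0 ≤ L := by
    refine le_trans (Finset.sum_nonneg fun i _ => ?_) hL
    positivity
  apply convexOn_of_hasDerivWithinAt2_nonneg (f' := fun r =>
      L * ((1/2) * (A + 2*B*r + C*r^2) * (2*B + 2*C*r) + (1/2) * (2*B + 2*C*r))
        - (1/4) * ∑ i, (2*((α i + β i * r)^2 - (b i)^2) * (2*(α i + β i * r) * β i)))
    (f'' := fun r =>
      L * ((1/2) * ((2*B + 2*C*r)^2 + (A + 2*B*r + C*r^2) * (2*C)) + C)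
        - (1/4) * ∑ i, (β i)^2 * (12*(α i + β i * r)^2 - 4*(b i)^2))
    convex_univ
  · fun_prop
  · intro r _
    apply HasDerivAt.hasDerivWithinAt
    apply HasDerivAt.sub
    · have h1 : HasDerivAt (fun r : ℝ => A + 2*B*r + C*r^2) (2*B + 2*C*r) r := by
        have := ((hasDerivAt_id r).const_mul (2*B)).const_add A |>.add
          (((hasDerivAt_pow 2 r).const_mul C))
        exact this.congr_deriv (by ring)
      have := ((h1.pow 2).const_mul (1/4:ℝ)).add (h1.const_mul (1/2:ℝ)) |>.const_mul L
      exact this.congr_deriv (by push_cast; ring)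
    · have hs : HasDerivAt (fun r : ℝ => ∑ i, ((α i + β i * r)^2 - (b i)^2)^2)
          (∑ i, (2*((α i + β i * r)^2 - (b i)^2) * (2*(α i + β i * r) * β i))) r := by
        apply HasDerivAt.fun_sum
        intro i _
        have h1 : HasDerivAt (fun r : ℝ => α i + β i * r) (β i) r := by
          simpa using ((hasDerivAt_id r).const_mul (β i)).const_add (α i)
        have := ((h1.pow 2).sub_const ((b i)^2)).pow 2
        exact this.congr_deriv (by push_cast; simp only [Pi.pow_apply]; ring)
      exact hs.const_mul (1/4:ℝ)
  · intro r _
    apply HasDerivAt.hasDerivWithinAt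
    apply HasDerivAt.sub
    · have h1 : HasDerivAt (fun r : ℝ => A + 2*B*r + C*r^2) (2*B + 2*C*r) r := by
        have := ((hasDerivAt_id r).const_mul (2*B)).const_add A |>.add
          (((hasDerivAt_pow 2 r).const_mul C))
        exact this.congr_deriv (by ring)
      have h2 : HasDerivAt (fun r : ℝ => 2*B + 2*C*r) (2*C) r := by
        simpa using ((hasDerivAt_id r).const_mul (2*C)).const_add (2*B)
      have := (((h1.const_mul (1/2:ℝ)).mul h2).add (h2.const_mul (1/2:ℝ))).const_mul L
      exact this.congr_deriv (by ring)
    · have hs : HasDerivAt (fun r : ℝ => ∑ i, (2*((α i + β i * r)^2 - (b i)^2) * (2*(α i + β i * r) * β i)))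
          (∑ i, (β i)^2 * (12*(α i + β i * r)^2 - 4*(b i)^2)) r := by
        apply HasDerivAt.fun_sum
        intro i _
        have h1 : HasDerivAt (fun r : ℝ => α i + β i * r) (β i) r := by
          simpa using ((hasDerivAt_id r).const_mul (β i)).const_add (α i)
        have := (((h1.pow 2).sub_const ((b i)^2)).const_mul 2).mul ((h1.const_mul 2).mul_const (β i))
        exact this.congr_deriv (by push_cast; simp only [Pi.pow_apply]; ring)
      exact hs.const_mul (1/4:ℝ)
  · intro r _
    have key : ∑ i, (β i)^2 * (12*(α i + β i * r)^2 - 4*(b i)^2)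
        ≤ ∑ i, (3*(n i)^4 + (n i)^2*(b i)^2) * (4 * C * (A + 2*B*r + C*r^2) + 4*C) := by
      apply Finset.sum_le_sum
      intro i _
      have h1 := hQ r i
      have h2 := hβ i
      have h3 := hP r
      nlinarith [sq_nonneg (β i), sq_nonneg (α i + β i * r), sq_nonneg (n i * b i),
        mul_le_mul h2 h1 (sq_nonneg _) (by positivity),
        mul_nonneg (mul_nonneg hC h3) (sq_nonneg (n i * b i))]
    have key2 : ∑ i, (3*(n i)^4 + (n i)^2*(b i)^2) * (4 * C * (A + 2*B*r + C*r^2) + 4*C)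
        ≤ L * (4 * C * (A + 2*B*r + C*r^2) + 4*C) := by
      rw [← Finset.sum_mul]
      apply mul_le_mul_of_nonneg_right hL
      have := hP r
      positivity
    have h3 := hP r
    nlinarith [mul_nonneg hL0 (sq_nonneg (2*B + 2*C*r))]

/-- L-smooth adaptability of the phase retrieval objective with respect to the
quartic kernel: with `g(x) = (1/4)∑ᵢ (⟪aᵢ, x⟫² - bᵢ²)²` and
`h(x) = (1/4)‖x‖⁴ + (1/2)‖x‖²` on `ℝ^d`, for every
`L ≥ ∑ᵢ (3‖aᵢ‖⁴ + ‖aᵢ‖²·bᵢ²)` the function `L·h - g` is convex on `ℝ^d`. -/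
theorem phase_retrieval_smad (d m : ℕ)
    (a : Fin m → EuclideanSpace ℝ (Fin d)) (b : Fin m → ℝ)
    (L : ℝ) (hL : L ≥ ∑ i, (3 * ‖a i‖ ^ 4 + ‖a i‖ ^ 2 * (b i) ^ 2)) :
    ConvexOn ℝ Set.univ (fun x : EuclideanSpace ℝ (Fin d) =>
      L * ((1 / 4) * ‖x‖ ^ 4 + (1 / 2) * ‖x‖ ^ 2) -
        (1 / 4) * ∑ i, (⟪a i, x⟫ ^ 2 - (b i) ^ 2) ^ 2) := by
  set f : EuclideanSpace ℝ (Fin d) → ℝ := fun x =>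
      L * ((1 / 4) * ‖x‖ ^ 4 + (1 / 2) * ‖x‖ ^ 2) -
        (1 / 4) * ∑ i, (⟪a i, x⟫ ^ 2 - (b i) ^ 2) ^ 2 with hf
  refine ⟨convex_univ, fun x _ y _ lam mu hlam hmu hlm => ?_⟩
  set v : EuclideanSpace ℝ (Fin d) := y - x with hv
  set A : ℝ := ‖x‖^2
  set B : ℝ := ⟪x, v⟫
  set C : ℝ := ‖v‖^2
  set α : Fin m → ℝ := fun i => ⟪a i, x⟫
  set β : Fin m → ℝ := fun i => ⟪a i, v⟫
  set φ : ℝ → ℝ := fun r =>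
      L * ((1/4) * (A + 2*B*r + C*r^2)^2 + (1/2) * (A + 2*B*r + C*r^2))
        - (1/4) * ∑ i, ((α i + β i * r)^2 - (b i)^2)^2 with hφ
  have hnorm : ∀ r : ℝ, ‖x + r • v‖^2 = A + 2*B*r + C*r^2 := by
    intro r
    rw [norm_add_sq_real, real_inner_smul_right, norm_smul]
    simp [A, B, C, mul_pow]
    ring
  have hEq : ∀ r : ℝ, f (x + r • v) = φ r := by
    intro r
    simp only [hf, hφ]
    rw [show ‖x + r • v‖^4 = (‖x + r • v‖^2)^2 by ring, hnorm]
    congr 2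
    apply Finset.sum_congr rfl
    intro i _
    rw [inner_add_right, real_inner_smul_right]
    simp only [α, β]; ring
  have hconv : ConvexOn ℝ Set.univ φ := by
    apply quartic_convex m A B C L α β (fun i => ‖a i‖) b (by positivity)
      (fun r => by rw [← hnorm]; positivity)
    · intro r i
      have h := real_inner_mul_inner_self_le (a i) (x + r • v)
      rw [real_inner_self_eq_norm_sq, real_inner_self_eq_norm_sq, hnorm,
        inner_add_right, real_inner_smul_right] at h
      calc (α i + β i * r)^2 = (⟪a i, x⟫ + r * ⟪a i, v⟫) * (⟪a i, x⟫ + r * ⟪a i, v⟫) := by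
            simp only [α, β]; ring
        _ ≤ _ := h
    · intro i
      have h := real_inner_mul_inner_self_le (a i) v
      rw [real_inner_self_eq_norm_sq, real_inner_self_eq_norm_sq] at h
      calc (β i)^2 = ⟪a i, v⟫ * ⟪a i, v⟫ := sq (β i) ▸ by simp [β, sq]
        _ ≤ _ := h
    · exact fun i => norm_nonneg _
    · exact hL
  have h01 := hconv.2 (Set.mem_univ (0:ℝ)) (Set.mem_univ (1:ℝ)) hlam hmu hlm
  have e0 : φ 0 = f x := by rw [← hEq]; simp
  have e1 : φ 1 = f y := by rw [← hEq]; simp [hv]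
  have emu : f (lam • x + mu • y) = φ mu := by
    rw [← hEq]
    congr 1
    have hlam' : lam = 1 - mu := by linarith
    rw [hlam', hv]
    module
  rw [emu, ← e0, ← e1]
  simpa using h01
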